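/- Let φ ∈ C²((0,∞); ℝ) and F > 0 with φ''(2F) ≤ 0. Then for every u ∈ 𝒰, E_qce''(y_F)[u,u] ≥ (A_F + φ''(2F)) ‖u'‖²_{ℓ²_ε}. -/

import Mathlib

open Finset Real

noncomputable section

/-- The index set `{-N+1, ..., N}` of one period. -/
def idx (N : ℕ) : Finset ℤ := Finset.Icc (-(N : ℤ) + 1) (N : ℤ)

/-- The space 𝒰 of 2N-periodic displacements with zero mean. -/
def uSet (N : ℕ) : Set (ℤ → ℝ) :=
  {u | (∀ ℓ : ℤ, u (ℓ + 2 * (N : ℤ)) = u ℓ) ∧ ∑ ℓ ∈ idx N, u ℓ = 0}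

/-- Backward difference `v'_ℓ = ε⁻¹ (v_ℓ - v_{ℓ-1})`, with `ε = 1/N`. -/
def bD (N : ℕ) (v : ℤ → ℝ) (ℓ : ℤ) : ℝ := (N : ℝ) * (v ℓ - v (ℓ - 1))

/-- Centered second difference `v''_ℓ = ε⁻² (v_{ℓ+1} - 2 v_ℓ + v_{ℓ-1})`. -/
def cD2 (N : ℕ) (v : ℤ → ℝ) (ℓ : ℤ) : ℝ := (N : ℝ) ^ 2 * (v (ℓ + 1) - 2 * v ℓ + v (ℓ - 1))

/-- Weighted ℓ²-norm. -/
def nl2 (N : ℕ) (v : ℤ → ℝ) : ℝ := Real.sqrt ((N : ℝ)⁻¹ * ∑ ℓ ∈ idx N, (v ℓ) ^ 2)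

/-- Weighted ℓ¹-norm. -/
def nl1 (N : ℕ) (v : ℤ → ℝ) : ℝ := (N : ℝ)⁻¹ * ∑ ℓ ∈ idx N, |v ℓ|

/-- ℓ∞-norm over one period. -/
def nlinf (N : ℕ) (v : ℤ → ℝ) : ℝ := ⨆ ℓ : {ℓ : ℤ // ℓ ∈ idx N}, |v ℓ.1|

/-- Weighted ℓ²-inner product. -/
def iprod (N : ℕ) (u v : ℤ → ℝ) : ℝ := (N : ℝ)⁻¹ * ∑ ℓ ∈ idx N, u ℓ * v ℓ

/-- The uniform deformation `(y_F)_ℓ = F ℓ ε`. -/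
def yF (N : ℕ) (F : ℝ) : ℤ → ℝ := fun ℓ => F * (ℓ : ℝ) * (N : ℝ)⁻¹

/-- First variation `E'(y)[u]`. -/
def dE (E : (ℤ → ℝ) → ℝ) (y u : ℤ → ℝ) : ℝ := deriv (fun t : ℝ => E (y + t • u)) 0

/-- Second variation `E''(y)[u,v]`. -/
def d2E (E : (ℤ → ℝ) → ℝ) (y u v : ℤ → ℝ) : ℝ :=
  deriv (fun s : ℝ => deriv (fun t : ℝ => E (y + s • u + t • v)) 0) 0

/-- The atomistic energy. -/
def Ea (N : ℕ) (φ : ℝ → ℝ) (y : ℤ → ℝ) : ℝ :=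
  (N : ℝ)⁻¹ * ∑ ℓ ∈ idx N, (φ (bD N y ℓ) + φ (bD N y ℓ + bD N y (ℓ + 1)))

/-- The local QC (continuum) energy. -/
def Eqcl (N : ℕ) (φ : ℝ → ℝ) (y : ℤ → ℝ) : ℝ :=
  (N : ℝ)⁻¹ * ∑ ℓ ∈ idx N, (φ (bD N y ℓ) + φ (2 * bD N y ℓ))

/-- The QNL atomistic region `{-K-1, ..., K+1}`. -/
def aQnl (K : ℕ) : Finset ℤ := Finset.Icc (-(K : ℤ) - 1) ((K : ℤ) + 1)

/-- The quasi-nonlocal QC energy. -/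
def Eqnl (N K : ℕ) (φ : ℝ → ℝ) (y : ℤ → ℝ) : ℝ :=
  (N : ℝ)⁻¹ * ((∑ ℓ ∈ idx N, φ (bD N y ℓ))
    + (∑ ℓ ∈ aQnl K, φ (bD N y ℓ + bD N y (ℓ + 1)))
    + ∑ ℓ ∈ idx N \ aQnl K, (φ (2 * bD N y ℓ) + φ (2 * bD N y (ℓ + 1))) / 2)

/-- The QCE atomistic region `{-K, ..., K}`. -/
def aQce (K : ℕ) : Finset ℤ := Finset.Icc (-(K : ℤ)) (K : ℤ)

/-- Atomistic energy contribution of atom ℓ. -/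
def eAtom (N : ℕ) (φ : ℝ → ℝ) (y : ℤ → ℝ) (ℓ : ℤ) : ℝ :=
  (φ (bD N y ℓ) + φ (bD N y (ℓ + 1)) + φ (bD N y (ℓ - 1) + bD N y ℓ)
    + φ (bD N y (ℓ + 1) + bD N y (ℓ + 2))) / 2

/-- Continuum energy contribution of atom ℓ. -/
def eCont (N : ℕ) (φ : ℝ → ℝ) (y : ℤ → ℝ) (ℓ : ℤ) : ℝ :=
  (φ (bD N y ℓ) + φ (bD N y (ℓ + 1)) + φ (2 * bD N y ℓ) + φ (2 * bD N y (ℓ + 1))) / 2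

/-- The energy-based QC energy. -/
def Eqce (N K : ℕ) (φ : ℝ → ℝ) (y : ℤ → ℝ) : ℝ :=
  (N : ℝ)⁻¹ * ((∑ ℓ ∈ idx N \ aQce K, eCont N φ y ℓ) + ∑ ℓ ∈ aQce K, eAtom N φ y ℓ)

/-- The prescribed backward difference `ĝ'` of the ghost-force corrector. -/
def ghatD (K : ℕ) (ℓ : ℤ) : ℝ :=
  if ℓ = -(K : ℤ) - 1 ∨ ℓ = (K : ℤ) + 2 then -(1 / 2)
  else if ℓ = -(K : ℤ) + 1 ∨ ℓ = (K : ℤ) then 1 / 2 else 0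

/-- `μ_ε = 2 sin(π ε / 2) / ε` with `ε = 1/N`. -/
def muEps (N : ℕ) : ℝ := 2 * Real.sin (Real.pi * (N : ℝ)⁻¹ / 2) / (N : ℝ)⁻¹

/-- The `𝒰^{-1,∞}`-norm of a functional `T` on 𝒰. -/
def dualNorm (N : ℕ) (T : (ℤ → ℝ) → ℝ) : ℝ :=
  sSup {r : ℝ | ∃ v ∈ uSet N, nl1 N (bD N v) = 1 ∧ r = T v}

lemma key_deriv (φ : ℝ → ℝ) (hφ : ContDiffOn ℝ 2 φ (Set.Ioi 0))
    {ι : Type*} [DecidableEq ι] (s : Finset ι) (w c b : ι → ℝ) (hc : ∀ i ∈ s, 0 < c i) :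
    deriv (deriv (fun r : ℝ => ∑ i ∈ s, w i * φ (c i + r * b i))) 0
      = ∑ i ∈ s, w i * b i ^ 2 * deriv (deriv φ) (c i) := by
  set U : Set ℝ := ⋂ i ∈ s, {r : ℝ | 0 < c i + r * b i} with hU
  have hUopen : IsOpen U := by
    refine isOpen_biInter_finset (fun i hi => ?_)
    have hcont : Continuous fun r : ℝ => c i + r * b i := by continuity
    exact isOpen_Ioi.preimage hcont
  have hU0 : (0 : ℝ) ∈ U := by
    simp only [hU, Set.mem_iInter, Set.mem_setOf_eq]
    intro i hi; simpa using hc i hi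
  have hmem : ∀ r ∈ U, ∀ i ∈ s, (0 : ℝ) < c i + r * b i := by
    intro r hr i hi
    simp only [hU, Set.mem_iInter, Set.mem_setOf_eq] at hr
    exact hr i hi
  have hφd : DifferentiableOn ℝ φ (Set.Ioi 0) := hφ.differentiableOn (by norm_num)
  have hφ' : ContDiffOn ℝ 1 (deriv φ) (Set.Ioi 0) :=
    hφ.deriv_of_isOpen isOpen_Ioi (by norm_num)
  have hD : ∀ r ∈ U, HasDerivAt (fun r : ℝ => ∑ i ∈ s, w i * φ (c i + r * b i))
      (∑ i ∈ s, w i * (deriv φ (c i + r * b i) * b i)) r := by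
    intro r hr
    refine HasDerivAt.fun_sum (fun i hi => ?_)
    have hx : (0 : ℝ) < c i + r * b i := hmem r hr i hi
    have h1 : DifferentiableAt ℝ φ (c i + r * b i) :=
      (hφd (c i + r * b i) hx).differentiableAt (isOpen_Ioi.mem_nhds hx)
    have h2 : HasDerivAt (fun r : ℝ => c i + r * b i) (b i) r := by
      simpa using ((hasDerivAt_id r).mul_const (b i)).const_add (c i)
    exact ((h1.hasDerivAt.comp r h2).const_mul (w i))
  have hEq : deriv (fun r : ℝ => ∑ i ∈ s, w i * φ (c i + r * b i))
      =ᶠ[nhds (0:ℝ)] (fun r => ∑ i ∈ s, w i * (deriv φ (c i + r * b i) * b i)) := by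
    filter_upwards [hUopen.mem_nhds hU0] with r hr
    exact (hD r hr).deriv
  rw [hEq.deriv_eq]
  have hD2 : HasDerivAt (fun r : ℝ => ∑ i ∈ s, w i * (deriv φ (c i + r * b i) * b i))
      (∑ i ∈ s, w i * ((deriv (deriv φ) (c i) * b i) * b i)) 0 := by
    refine HasDerivAt.fun_sum (fun i hi => ?_)
    have hx : (0 : ℝ) < c i + 0 * b i := hmem 0 hU0 i hi
    have h1 : DifferentiableAt ℝ (deriv φ) (c i + 0 * b i) :=
      ((hφ'.differentiableOn (by norm_num)) _ hx).differentiableAt (isOpen_Ioi.mem_nhds hx)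
    have h2 : HasDerivAt (fun r : ℝ => c i + r * b i) (b i) 0 := by
      simpa using ((hasDerivAt_id (0:ℝ)).mul_const (b i)).const_add (c i)
    have h4 := (h1.hasDerivAt.comp 0 h2).mul_const (b i)
    have h3 : deriv (deriv φ) (c i + 0 * b i) = deriv (deriv φ) (c i) := by norm_num
    rw [h3] at h4
    exact h4.const_mul (w i)
  rw [hD2.deriv]
  exact Finset.sum_congr rfl (fun i hi => by ring)

lemma d2E_eq (E : (ℤ → ℝ) → ℝ) (y u : ℤ → ℝ) :
    d2E E y u u = deriv (deriv (fun r : ℝ => E (y + r • u))) 0 := by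
  unfold d2E
  have h : ∀ s t : ℝ, y + s • u + t • u = y + (s + t) • u := by
    intro s t; ext ℓ; simp [add_smul]; ring
  have h2 : ∀ s : ℝ, (fun t : ℝ => E (y + s • u + t • u))
      = fun t => (fun r : ℝ => E (y + r • u)) (s + t) := by
    intro s; funext t; rw [h]
  have h3 : ∀ s : ℝ, deriv (fun t : ℝ => E (y + s • u + t • u)) 0
      = deriv (fun r : ℝ => E (y + r • u)) s := by
    intro s; rw [h2 s]
    have := deriv_comp_const_add (fun r : ℝ => E (y + r • u)) s (0:ℝ)
    simpa using this
  simp only [h3]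

lemma bD_lin (N : ℕ) (hN : 0 < N) (F r : ℝ) (u : ℤ → ℝ) (ℓ : ℤ) :
    bD N (yF N F + r • u) ℓ = F + r * bD N u ℓ := by
  have hN' : (N : ℝ) ≠ 0 := by positivity
  simp only [bD, yF, Pi.add_apply, Pi.smul_apply, smul_eq_mul]
  push_cast
  field_simp
  ring

lemma bD_per (N : ℕ) (u : ℤ → ℝ) (hu : ∀ ℓ : ℤ, u (ℓ + 2 * (N : ℤ)) = u ℓ) (ℓ : ℤ) :
    bD N u (ℓ + 2 * (N : ℤ)) = bD N u ℓ := by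
  simp only [bD]
  have h1 : ℓ + 2 * (N:ℤ) - 1 = (ℓ - 1) + 2 * (N:ℤ) := by ring
  rw [h1, hu ℓ, hu (ℓ - 1)]

lemma sum_shift (g : ℤ → ℝ) (p q k : ℤ) :
    ∑ ℓ ∈ Finset.Icc p q, g (ℓ + k) = ∑ j ∈ Finset.Icc (p+k) (q+k), g j := by
  rw [← map_add_right_Icc p q k, Finset.sum_map]
  rfl

lemma Icc_top (p q : ℤ) (h : p ≤ q + 1) :
    Finset.Icc p (q+1) = insert (q+1) (Finset.Icc p q) := by
  ext x; simp only [Finset.mem_Icc, Finset.mem_insert]; omega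

lemma Icc_bot (p q : ℤ) (h : p ≤ q) :
    Finset.Icc p q = insert p (Finset.Icc (p+1) q) := by
  ext x; simp only [Finset.mem_Icc, Finset.mem_insert]; omega

def wwAux (N : ℕ) : ℤ × Fin 4 → ℝ := fun _ => (N:ℝ)⁻¹ / 2
def ccAux (F : ℝ) : ℤ × Fin 4 → ℝ := fun i => if (i.2 : ℕ) < 2 then F else 2*F
def bbAux (K : ℕ) (a : ℤ → ℝ) : ℤ × Fin 4 → ℝ := fun i =>
  if i.2 = 0 then a i.1 else if i.2 = 1 then a (i.1+1)
  else if i.2 = 2 then (if i.1 ∈ aQce K then a (i.1-1) + a i.1 else 2 * a i.1)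
  else (if i.1 ∈ aQce K then a (i.1+1) + a (i.1+2) else 2 * a (i.1+1))

lemma ccAux0 (F : ℝ) (ℓ : ℤ) : ccAux F (ℓ, 0) = F := rfl
lemma ccAux1 (F : ℝ) (ℓ : ℤ) : ccAux F (ℓ, 1) = F := rfl
lemma ccAux2 (F : ℝ) (ℓ : ℤ) : ccAux F (ℓ, 2) = 2*F := rfl
lemma ccAux3 (F : ℝ) (ℓ : ℤ) : ccAux F (ℓ, 3) = 2*F := rfl
lemma bbAux0 (K : ℕ) (a : ℤ → ℝ) (ℓ : ℤ) : bbAux K a (ℓ, 0) = a ℓ := rfl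
lemma bbAux1 (K : ℕ) (a : ℤ → ℝ) (ℓ : ℤ) : bbAux K a (ℓ, 1) = a (ℓ+1) := rfl
lemma bbAux2 (K : ℕ) (a : ℤ → ℝ) (ℓ : ℤ) :
    bbAux K a (ℓ, 2) = if ℓ ∈ aQce K then a (ℓ-1) + a ℓ else 2 * a ℓ := rfl
lemma bbAux3 (K : ℕ) (a : ℤ → ℝ) (ℓ : ℤ) :
    bbAux K a (ℓ, 3) = if ℓ ∈ aQce K then a (ℓ+1) + a (ℓ+2) else 2 * a (ℓ+1) := rfl

set_option maxHeartbeats 1000000 in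
theorem stmt10 (N K : ℕ) (hN : 2 ≤ N) (hK : 1 < K) (hKN : K + 3 ≤ N)
    (φ : ℝ → ℝ) (hφ : ContDiffOn ℝ 2 φ (Set.Ioi 0)) (F : ℝ) (hF : 0 < F)
    (h2F : deriv (deriv φ) (2 * F) ≤ 0) :
    ∀ u ∈ uSet N,
      (deriv (deriv φ) F + 4 * deriv (deriv φ) (2 * F) + deriv (deriv φ) (2 * F))
          * (nl2 N (bD N u)) ^ 2
        ≤ d2E (Eqce N K φ) (yF N F) u u := by
  rintro u ⟨hper, -⟩
  have hN0 : 0 < N := by omega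
  have hNR : (0:ℝ) < (N:ℝ) := by positivity
  set a : ℤ → ℝ := bD N u with ha
  set p : ℝ := deriv (deriv φ) F with hp
  set q : ℝ := deriv (deriv φ) (2*F) with hq
  -- the indexed representation
  set SS : Finset (ℤ × Fin 4) := (idx N) ×ˢ (Finset.univ : Finset (Fin 4)) with hSS
  have hlin : ∀ r : ℝ, ∀ ℓ : ℤ, bD N (yF N F + r • u) ℓ = F + r * a ℓ :=
    fun r ℓ => bD_lin N hN0 F r u ℓ
  have hsub : aQce K ⊆ idx N := by
    intro x hx
    simp only [aQce, idx, Finset.mem_Icc] at *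
    omega
  have expand : ∀ r : ℝ, ∀ ℓ : ℤ,
      (∑ j : Fin 4, wwAux N (ℓ, j) * φ (ccAux F (ℓ, j) + r * bbAux K a (ℓ, j)))
      = if ℓ ∈ aQce K then (N:ℝ)⁻¹ * eAtom N φ (yF N F + r • u) ℓ
        else (N:ℝ)⁻¹ * eCont N φ (yF N F + r • u) ℓ := by
    intro r ℓ
    rw [Fin.sum_univ_four]
    by_cases hℓ : ℓ ∈ aQce K
    · simp only [wwAux, ccAux0, ccAux1, ccAux2, ccAux3, bbAux0, bbAux1, bbAux2, bbAux3,
        hℓ, if_true, eAtom, hlin r]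
      have e1 : 2*F + r * (a (ℓ-1) + a ℓ) = (F + r * a (ℓ-1)) + (F + r * a ℓ) := by ring
      have e2 : 2*F + r * (a (ℓ+1) + a (ℓ+2)) = (F + r * a (ℓ+1)) + (F + r * a (ℓ+2)) := by ring
      rw [e1, e2]; ring
    · simp only [wwAux, ccAux0, ccAux1, ccAux2, ccAux3, bbAux0, bbAux1, bbAux2, bbAux3,
        hℓ, if_false, eCont, hlin r]
      have e1 : 2*F + r * (2 * a ℓ) = 2 * (F + r * a ℓ) := by ring
      have e2 : 2*F + r * (2 * a (ℓ+1)) = 2 * (F + r * a (ℓ+1)) := by ring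
      rw [e1, e2]; ring
  have hrep : (fun r : ℝ => Eqce N K φ (yF N F + r • u))
      = fun r : ℝ => ∑ i ∈ SS, wwAux N i * φ (ccAux F i + r * bbAux K a i) := by
    funext r
    rw [hSS, Finset.sum_product]
    simp only [expand r]
    rw [← Finset.sum_sdiff hsub]
    rw [Finset.sum_congr rfl (fun ℓ hℓ => if_neg (Finset.mem_sdiff.mp hℓ).2),
      Finset.sum_congr rfl (fun ℓ (hℓ : ℓ ∈ aQce K) => if_pos hℓ)]
    simp only [Eqce]
    rw [mul_add, Finset.mul_sum, Finset.mul_sum]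
  rw [d2E_eq, hrep, key_deriv φ hφ SS (wwAux N) (ccAux F) (bbAux K a)
    (by intro i _; simp only [ccAux]; split <;> [exact hF; linarith])]
  -- simplify the RHS sum
  rw [hSS, Finset.sum_product]
  have expand2 : ∀ ℓ : ℤ,
      (∑ j : Fin 4, wwAux N (ℓ, j) * bbAux K a (ℓ, j) ^ 2 * deriv (deriv φ) (ccAux F (ℓ, j)))
      = (N:ℝ)⁻¹/2 * ((a ℓ)^2 * p + (a (ℓ+1))^2 * p
          + ((if ℓ ∈ aQce K then a (ℓ-1) + a ℓ else 2 * a ℓ)^2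
            + (if ℓ ∈ aQce K then a (ℓ+1) + a (ℓ+2) else 2 * a (ℓ+1))^2) * q) := by
    intro ℓ
    rw [Fin.sum_univ_four]
    simp only [wwAux, ccAux0, ccAux1, ccAux2, ccAux3, bbAux0, bbAux1, bbAux2, bbAux3, hp, hq]
    ring
  simp only [expand2]
  -- abbreviations for the sums
  set S0 : ℝ := ∑ ℓ ∈ idx N, (a ℓ)^2 with hS0
  set S1 : ℝ := ∑ ℓ ∈ idx N, (a (ℓ+1))^2 with hS1
  set R : ℝ := ∑ ℓ ∈ idx N, ((if ℓ ∈ aQce K then a (ℓ-1) + a ℓ else 2 * a ℓ)^2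
      + (if ℓ ∈ aQce K then a (ℓ+1) + a (ℓ+2) else 2 * a (ℓ+1))^2) with hR
  have hsum : ∑ ℓ ∈ idx N, ((N:ℝ)⁻¹/2 * ((a ℓ)^2 * p + (a (ℓ+1))^2 * p
      + ((if ℓ ∈ aQce K then a (ℓ-1) + a ℓ else 2 * a ℓ)^2
        + (if ℓ ∈ aQce K then a (ℓ+1) + a (ℓ+2) else 2 * a (ℓ+1))^2) * q))
      = (N:ℝ)⁻¹/2 * (S0 * p + S1 * p + R * q) := by
    rw [← Finset.mul_sum, hS0, hS1, hR]
    congr 1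
    rw [Finset.sum_add_distrib, Finset.sum_add_distrib, ← Finset.sum_mul, ← Finset.sum_mul,
      ← Finset.sum_mul]
  rw [hsum]
  -- norm squared
  have hnl2 : (nl2 N (bD N u))^2 = (N:ℝ)⁻¹ * S0 := by
    rw [nl2, ← ha, ← hS0, Real.sq_sqrt]
    positivity
  rw [hnl2]
  -- periodicity: S1 = S0
  have haper : ∀ ℓ : ℤ, a (ℓ + 2 * (N:ℤ)) = a ℓ := fun ℓ => bD_per N u hper ℓ
  have hS1S0 : S1 = S0 := by
    rw [hS1, hS0, idx, sum_shift (fun j => (a j)^2) (-(N:ℤ)+1) (N:ℤ) 1]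
    have e1 : (-(N:ℤ) + 1 + 1) = (-(N:ℤ) + 2) := by ring
    rw [e1, Icc_top (-(N:ℤ)+2) (N:ℤ) (by omega), Finset.sum_insert (by simp only [Finset.mem_Icc]; omega),
      Icc_bot (-(N:ℤ)+1) (N:ℤ) (by omega), Finset.sum_insert (by simp only [Finset.mem_Icc]; omega)]
    have e2 : ((N:ℤ) + 1) = (-(N:ℤ)+1) + 2 * (N:ℤ) := by ring
    rw [e2, haper (-(N:ℤ)+1), e1]
  -- the shifted sums over aQce
  have hshift : ∀ k : ℤ, ∑ ℓ ∈ aQce K, (a (ℓ+k))^2 = ∑ j ∈ Finset.Icc (-(K:ℤ)+k) ((K:ℤ)+k), (a j)^2 := by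
    intro k
    rw [aQce]
    exact sum_shift (fun j => (a j)^2) _ _ k
  have hnonneg : ∀ j : ℤ, (0:ℝ) ≤ (a j)^2 := fun j => sq_nonneg _
  set P0 : ℝ := ∑ ℓ ∈ aQce K, (a ℓ)^2 with hP0
  set P1 : ℝ := ∑ ℓ ∈ aQce K, (a (ℓ+1))^2 with hP1
  -- P_{-1} ≤ a(-K-1)^2 + P0
  have hPm1 : ∑ ℓ ∈ aQce K, (a (ℓ-1))^2 ≤ (a (-(K:ℤ)-1))^2 + P0 := by
    have h1 : ∀ ℓ : ℤ, (a (ℓ-1))^2 = (a (ℓ + (-1)))^2 := by intro ℓ; rw [sub_eq_add_neg]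
    rw [Finset.sum_congr rfl (fun ℓ _ => h1 ℓ), hshift (-1)]
    have e1 : (-(K:ℤ) + (-1)) = -(K:ℤ)-1 := by ring
    have e2 : ((K:ℤ) + (-1)) = ((K:ℤ)-1) := by ring
    rw [e1, e2, Icc_bot (-(K:ℤ)-1) ((K:ℤ)-1) (by omega),
      Finset.sum_insert (by simp only [Finset.mem_Icc]; omega)]
    have e3 : (-(K:ℤ)-1+1) = -(K:ℤ) := by ring
    rw [e3]
    have hsub2 : Finset.Icc (-(K:ℤ)) ((K:ℤ)-1) ⊆ aQce K := by
      intro x hx; simp only [aQce, Finset.mem_Icc] at *; omega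
    have := Finset.sum_le_sum_of_subset_of_nonneg hsub2 (fun j _ _ => hnonneg j)
    linarith
  -- P2 ≤ a(K+2)^2 + P1
  have hP2 : ∑ ℓ ∈ aQce K, (a (ℓ+2))^2 ≤ (a ((K:ℤ)+2))^2 + P1 := by
    rw [hshift 2]
    have e1 : ((K:ℤ)+2) = ((K:ℤ)+1)+1 := by ring
    rw [e1, Icc_top (-(K:ℤ)+2) ((K:ℤ)+1) (by omega),
      Finset.sum_insert (by simp only [Finset.mem_Icc]; omega)]
    have hsub2 : Finset.Icc (-(K:ℤ)+2) ((K:ℤ)+1) ⊆ Finset.Icc (-(K:ℤ)+1) ((K:ℤ)+1) := by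
      intro x hx; simp only [Finset.mem_Icc] at *; omega
    have h2 := Finset.sum_le_sum_of_subset_of_nonneg hsub2 (fun j _ _ => hnonneg j)
    have h3 : P1 = ∑ j ∈ Finset.Icc (-(K:ℤ)+1) ((K:ℤ)+1), (a j)^2 := by
      rw [hP1, hshift 1]
    linarith [h2, h3.ge, h3.le]
  -- boundary terms bounded by S0
  have hbdry : (a (-(K:ℤ)-1))^2 + (a ((K:ℤ)+2))^2 ≤ S0 := by
    have hpair : ({-(K:ℤ)-1, (K:ℤ)+2} : Finset ℤ) ⊆ idx N := by
      intro x hx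
      simp only [Finset.mem_insert, Finset.mem_singleton] at hx
      simp only [idx, Finset.mem_Icc]
      rcases hx with h | h <;> omega
    have hne : (-(K:ℤ)-1) ≠ (K:ℤ)+2 := by omega
    have := Finset.sum_le_sum_of_subset_of_nonneg hpair (fun j _ _ => hnonneg j)
    rw [Finset.sum_pair hne] at this
    exact this
  -- sums over sdiff
  have hsd0 : ∑ ℓ ∈ idx N \ aQce K, (a ℓ)^2 = S0 - P0 := by
    have := Finset.sum_sdiff (f := fun ℓ => (a ℓ)^2) hsub
    rw [← hS0, ← hP0] at this
    linarith
  have hsd1 : ∑ ℓ ∈ idx N \ aQce K, (a (ℓ+1))^2 = S1 - P1 := by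
    have := Finset.sum_sdiff (f := fun ℓ => (a (ℓ+1))^2) hsub
    rw [← hS1, ← hP1] at this
    linarith
  -- P0 ≤ S0 etc. not needed; bound R
  have hRbound : R ≤ 10 * S0 := by
    rw [hR, ← Finset.sum_sdiff hsub]
    have hc1 : ∑ ℓ ∈ idx N \ aQce K, ((if ℓ ∈ aQce K then a (ℓ-1) + a ℓ else 2 * a ℓ)^2
        + (if ℓ ∈ aQce K then a (ℓ+1) + a (ℓ+2) else 2 * a (ℓ+1))^2)
        = ∑ ℓ ∈ idx N \ aQce K, (4*(a ℓ)^2 + 4*(a (ℓ+1))^2) := by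
      refine Finset.sum_congr rfl (fun ℓ hℓ => ?_)
      rw [if_neg (Finset.mem_sdiff.mp hℓ).2, if_neg (Finset.mem_sdiff.mp hℓ).2]
      ring
    have hc2 : ∑ ℓ ∈ aQce K, ((if ℓ ∈ aQce K then a (ℓ-1) + a ℓ else 2 * a ℓ)^2
        + (if ℓ ∈ aQce K then a (ℓ+1) + a (ℓ+2) else 2 * a (ℓ+1))^2)
        ≤ ∑ ℓ ∈ aQce K, (2*(a (ℓ-1))^2 + 2*(a ℓ)^2 + 2*(a (ℓ+1))^2 + 2*(a (ℓ+2))^2) := by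
      refine Finset.sum_le_sum (fun ℓ hℓ => ?_)
      rw [if_pos hℓ, if_pos hℓ]
      nlinarith [sq_nonneg (a (ℓ-1) - a ℓ), sq_nonneg (a (ℓ+1) - a (ℓ+2))]
    rw [hc1]
    have hc3 : ∑ ℓ ∈ idx N \ aQce K, (4*(a ℓ)^2 + 4*(a (ℓ+1))^2)
        = 4*(S0 - P0) + 4*(S1 - P1) := by
      rw [Finset.sum_add_distrib, ← Finset.mul_sum, ← Finset.mul_sum, hsd0, hsd1]
    have hc4 : ∑ ℓ ∈ aQce K, (2*(a (ℓ-1))^2 + 2*(a ℓ)^2 + 2*(a (ℓ+1))^2 + 2*(a (ℓ+2))^2)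
        = 2*(∑ ℓ ∈ aQce K, (a (ℓ-1))^2) + 2*P0 + 2*P1 + 2*(∑ ℓ ∈ aQce K, (a (ℓ+2))^2) := by
      rw [Finset.sum_add_distrib, Finset.sum_add_distrib, Finset.sum_add_distrib,
        ← Finset.mul_sum, ← Finset.mul_sum, ← Finset.mul_sum, ← Finset.mul_sum, hP0, hP1]
    have hP0S : P0 ≤ S0 := by
      have := Finset.sum_le_sum_of_subset_of_nonneg hsub (fun j _ _ => hnonneg j)
      rw [← hS0, ← hP0] at this; exact this
    rw [hc3]
    have := hc2
    rw [hc4] at this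
    linarith [hPm1, hP2, hbdry, hS1S0]
  -- final inequality
  have hS0nn : 0 ≤ S0 := Finset.sum_nonneg (fun j _ => hnonneg j)
  have hqnn : 0 ≤ -q := by linarith
  rw [hS1S0]
  have hfin : (p + 4*q + q) * ((N:ℝ)⁻¹ * S0) ≤ (N:ℝ)⁻¹/2 * (S0 * p + S0 * p + R * q) := by
    nlinarith [mul_nonneg (by positivity : (0:ℝ) ≤ (N:ℝ)⁻¹/2)
      (mul_nonneg hqnn (by linarith : (0:ℝ) ≤ 10*S0 - R))]
  exact hfin
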